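/- For any 1-Lipschitz function g̃ : K → ℝ (with respect to ℓ∞ norm) on a bounded domain K ⊆ ℝ^{d} and any ε > 0, there exists an ℓ∞-dist net g with width at most d + 2 (and some finite depth) such that |g(x) − g̃(x)| ≤ ε for all x ∈ K. -/
import Mathlib

/-- One ℓ∞-dist layer: coordinate `k` computes `‖x − w_k‖_∞ + b_k`. -/
def distLayer {d m : ℕ} (w : Fin m → Fin d → ℝ) (b : Fin m → ℝ)
    (x : Fin d → ℝ) : Fin m → ℝ :=
  fun k => ‖x - w k‖ + b k

/-- An ℓ∞-dist net: composition of `L` ℓ∞-dist layers with given widths. -/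
def distNet (dims : ℕ → ℕ)
    (w : ∀ l : ℕ, Fin (dims (l + 1)) → Fin (dims l) → ℝ)
    (b : ∀ l : ℕ, Fin (dims (l + 1)) → ℝ) :
    ∀ L : ℕ, (Fin (dims 0) → ℝ) → Fin (dims L) → ℝ
  | 0, x => x
  | L + 1, x => distLayer (w L) (b L) (distNet dims w b L x)

private lemma pi_norm_eq_of_forall {n : ℕ} (v : Fin n → ℝ) (c : ℝ) (i₀ : Fin n)
    (hub : ∀ i, |v i| ≤ c) (hex : |v i₀| = c) : ‖v‖ = c := by
  refine le_antisymm ?_ ?_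
  · rw [pi_norm_le_iff_of_nonneg (hex ▸ abs_nonneg (v i₀))]
    intro i
    simpa [Real.norm_eq_abs] using hub i
  · calc c = |v i₀| := hex.symm
    _ = ‖v i₀‖ := (Real.norm_eq_abs _).symm
    _ ≤ ‖v‖ := norm_le_pi_norm v i₀

private lemma unit_eval {n : ℕ} (y wk : Fin n → ℝ) (c : ℝ) (i₀ : Fin n)
    (hub : ∀ i, |y i - wk i| ≤ c) (hex : |y i₀ - wk i₀| = c) : ‖y - wk‖ = c := by
  refine pi_norm_eq_of_forall _ c i₀ (fun i => ?_) ?_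
  · simpa using hub i
  · simpa using hex

private lemma exists_abs_eq_pi_norm {n : ℕ} (hn : 0 < n) (v : Fin n → ℝ) :
    ∃ i, |v i| = ‖v‖ := by
  haveI : Nonempty (Fin n) := ⟨⟨0, hn⟩⟩
  obtain ⟨i, -, hi⟩ := Finset.exists_mem_eq_sup' (Finset.univ_nonempty (α := Fin n))
    (fun i => |v i|)
  refine ⟨i, ?_⟩
  have h := pi_norm_eq_of_forall v (Finset.univ.sup' Finset.univ_nonempty (fun i => |v i|)) i
    (fun j => Finset.le_sup' (fun i => |v i|) (Finset.mem_univ j)) hi.symm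
  rw [h]
  exact hi.symm

private lemma pass_unit {n : ℕ} (y wk : Fin n → ℝ) (B : ℝ) (k₀ : Fin n)
    (hwk : wk k₀ = -B) (hw0 : ∀ i, i ≠ k₀ → wk i = 0)
    (hnn : 0 ≤ y k₀ + B)
    (hbd : ∀ i, i ≠ k₀ → |y i| ≤ y k₀ + B) :
    ‖y - wk‖ = y k₀ + B := by
  refine unit_eval y wk _ k₀ (fun i => ?_) ?_
  · by_cases h : i = k₀
    · subst h; rw [hwk, sub_neg_eq_add, abs_of_nonneg hnn]
    · rw [hw0 i h, sub_zero]; exact hbd i h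
  · rw [hwk, sub_neg_eq_add, abs_of_nonneg hnn]

private def netW (d M : ℕ) (B Q : ℝ) (P : ℕ → ℕ → ℝ) (G : ℕ → ℝ) (l k i : ℕ) : ℝ :=
  if l = 4*M+1 then (if i = d then -B else 0)
  else if l = 0 then (if k < d then (if i = k then -B else 0) else P 0 i)
  else if l % 4 = 1 ∨ l % 4 = 2 then
    (if k < d then (if i = k then -B else 0)
     else if k = d then (if i = d then -B else 0)
     else if l % 4 = 1 then (if i < d then P (l/4+1) i - Q else 0)
     else (if i < d then P (l/4+1) i + Q else 0))
  else if l % 4 = 3 then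
    (if k < d then (if i = k then -B else 0)
     else if i < d then 0 else if i = d then B else B + Q - G (l/4+1))
  else
    (if k < d then (if i = k then -B else 0) else (if i = d then B else 0))

private def netB (d M : ℕ) (B : ℝ) (G : ℕ → ℝ) (l k : ℕ) : ℝ :=
  if l = 4*M+1 then -B
  else if l = 0 then (if k < d then -B else G 0)
  else if k = d+1 then 0 else -B

section
variable {d M : ℕ} {B Q : ℝ} {P : ℕ → ℕ → ℝ} {G : ℕ → ℝ} {l k i : ℕ}

private lemma netW_pass (h1 : l ≠ 4*M+1) (hk : k < d) :
    netW d M B Q P G l k i = (if i = k then -B else 0) := by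
  unfold netW
  rw [if_neg h1]
  by_cases h0 : l = 0
  · rw [if_pos h0, if_pos hk]
  · rw [if_neg h0]
    by_cases h12 : l % 4 = 1 ∨ l % 4 = 2
    · rw [if_pos h12, if_pos hk]
    · rw [if_neg h12]
      by_cases h3 : l % 4 = 3
      · rw [if_pos h3, if_pos hk]
      · rw [if_neg h3, if_pos hk]

private lemma netW_final : netW d M B Q P G (4*M+1) k i = (if i = d then -B else 0) := by
  unfold netW; rw [if_pos rfl]

private lemma netW_m0 (hk : ¬ k < d) : netW d M B Q P G 0 k i = P 0 i := by
  unfold netW; rw [if_neg (by omega), if_pos rfl, if_neg hk]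

private lemma netW_mpass (h1 : l ≠ 4*M+1) (h0 : l ≠ 0) (h12 : l % 4 = 1 ∨ l % 4 = 2)
    (hk1 : ¬ k < d) (hk : k = d) :
    netW d M B Q P G l k i = (if i = d then -B else 0) := by
  unfold netW; rw [if_neg h1, if_neg h0, if_pos h12, if_neg hk1, if_pos hk]

private lemma netW_u (h1 : l ≠ 4*M+1) (h0 : l ≠ 0) (hm : l % 4 = 1)
    (hk1 : ¬ k < d) (hk2 : k ≠ d) :
    netW d M B Q P G l k i = (if i < d then P (l/4+1) i - Q else 0) := by
  unfold netW; rw [if_neg h1, if_neg h0, if_pos (Or.inl hm), if_neg hk1, if_neg hk2, if_pos hm]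

private lemma netW_r (h1 : l ≠ 4*M+1) (h0 : l ≠ 0) (hm : l % 4 = 2)
    (hk1 : ¬ k < d) (hk2 : k ≠ d) :
    netW d M B Q P G l k i = (if i < d then P (l/4+1) i + Q else 0) := by
  unfold netW
  rw [if_neg h1, if_neg h0, if_pos (Or.inr hm), if_neg hk1, if_neg hk2, if_neg (by omega)]

private lemma netW_C (h1 : l ≠ 4*M+1) (h0 : l ≠ 0) (hm : l % 4 = 3) (hk1 : ¬ k < d) :
    netW d M B Q P G l k i = (if i < d then 0 else if i = d then B else B + Q - G (l/4+1)) := by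
  unfold netW; rw [if_neg h1, if_neg h0, if_neg (by omega), if_pos hm, if_neg hk1]

private lemma netW_D (h1 : l ≠ 4*M+1) (h0 : l ≠ 0) (hm : l % 4 = 0) (hk1 : ¬ k < d) :
    netW d M B Q P G l k i = (if i = d then B else 0) := by
  unfold netW; rw [if_neg h1, if_neg h0, if_neg (by omega), if_neg (by omega), if_neg hk1]

private lemma netB_final : netB d M B G (4*M+1) k = -B := by
  unfold netB; rw [if_pos rfl]

private lemma netB_0 (hk : k < d) : netB d M B G 0 k = -B := by
  unfold netB; rw [if_neg (by omega), if_pos rfl, if_pos hk]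

private lemma netB_0m (hk : ¬ k < d) : netB d M B G 0 k = G 0 := by
  unfold netB; rw [if_neg (by omega), if_pos rfl, if_neg hk]

private lemma netB_mid (h1 : l ≠ 4*M+1) (h0 : l ≠ 0) :
    netB d M B G l k = if k = d+1 then 0 else -B := by
  unfold netB; rw [if_neg h1, if_neg h0]

end

set_option maxHeartbeats 2000000 in
/-- Lipschitz-universal approximation: any 1-Lipschitz (w.r.t. ℓ∞) function on a
bounded domain `K ⊆ ℝ^d` can be `ε`-approximated on `K` by an ℓ∞-dist net of
width at most `d + 2` and scalar output. -/
theorem linf_dist_net_universal_approx (d : ℕ) (K : Set (Fin d → ℝ))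
    (hK : Bornology.IsBounded K) (g' : (Fin d → ℝ) → ℝ)
    (hg : LipschitzOnWith 1 g' K) (ε : ℝ) (hε : 0 < ε) :
    ∃ (L : ℕ) (dims : ℕ → ℕ) (h0 : dims 0 = d) (_ : dims L = 1)
      (_ : ∀ l ≤ L, dims l ≤ d + 2)
      (w : ∀ l : ℕ, Fin (dims (l + 1)) → Fin (dims l) → ℝ)
      (b : ∀ l : ℕ, Fin (dims (l + 1)) → ℝ),
      ∀ x ∈ K, ∀ k : Fin (dims L),
        |distNet dims w b L (fun i => x (Fin.cast h0 i)) k - g' x| ≤ ε := by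
  classical
  rcases K.eq_empty_or_nonempty with hKe | ⟨x₀, hx₀⟩
  · refine ⟨1, fun l => if l = 0 then d else 1, by simp, by simp, ?_,
      fun _ _ _ => 0, fun _ _ => 0, ?_⟩
    · intro l _; dsimp only; split <;> omega
    · intro x hx; rw [hKe] at hx; exact absurd hx (Set.notMem_empty x)
  rcases Nat.eq_zero_or_pos d with rfl | hd
  · have h0' : (fun l => if l = 0 then (0:ℕ) else 1) 0 = 0 := by simp
    refine ⟨1, fun l => if l = 0 then 0 else 1, h0', by simp,
      (by intro l _; dsimp only; split <;> omega), fun _ _ _ => 0, fun _ _ => g' x₀, ?_⟩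
    intro x hx k
    have hx0 : x = x₀ := funext fun i => absurd i.isLt (by omega)
    have e1 : distNet (fun l => if l = 0 then 0 else 1) (fun _ _ _ => 0) (fun _ _ => g' x₀) 1
        (fun i => x (Fin.cast h0' i)) k
        = ‖(fun i => x (Fin.cast h0' i)) - (fun _ => (0:ℝ))‖ + g' x₀ := rfl
    have hz : (fun i => x (Fin.cast h0' i)) - (fun _ => (0:ℝ)) = 0 := by
      funext i
      exact absurd i.isLt (by simp)
    rw [e1, hz, norm_zero, hx0]
    simpa using le_of_lt hε
  -- main case : d ≥ 1, K nonempty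
  haveI hFinNe : Nonempty (Fin d) := ⟨⟨0, hd⟩⟩
  obtain ⟨R0, hR0⟩ := isBounded_iff_forall_norm_le.mp hK
  set R := max R0 0 with hRdef
  have hRnn : (0:ℝ) ≤ R := le_max_right _ _
  have hRb : ∀ y ∈ K, ‖y‖ ≤ R := fun y hy => (hR0 y hy).trans (le_max_left _ _)
  -- finite ε/2-net with centers in K
  have htb : TotallyBounded K := hK.isCompact_closure.totallyBounded.subset subset_closure
  obtain ⟨t, htK, htfin, hcov⟩ := totallyBounded_iff_subset.mp htb _
    (Metric.dist_mem_uniformity (by linarith : (0:ℝ) < ε/2))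
  have htne : t.Nonempty := by
    obtain ⟨y, hy, -⟩ := Set.mem_iUnion₂.mp (hcov hx₀)
    exact ⟨y, hy⟩
  set F := htfin.toFinset with hF
  have hFne : F.Nonempty := by
    obtain ⟨y, hy⟩ := htne; exact ⟨y, htfin.mem_toFinset.mpr hy⟩
  obtain ⟨M, hM⟩ : ∃ M, F.card = M + 1 :=
    ⟨F.card - 1, (Nat.succ_pred_eq_of_pos (Finset.card_pos.mpr hFne)).symm⟩
  set e := F.equivFin.symm with he
  have hmodlt : ∀ n : ℕ, n % (M+1) < F.card := fun n => by
    rw [hM]; exact Nat.mod_lt _ (Nat.succ_pos M)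
  set pp : ℕ → (Fin d → ℝ) := fun n => (e ⟨n % (M+1), hmodlt n⟩ : (Fin d → ℝ)) with hpp
  have hppK : ∀ n, pp n ∈ K := fun n => htK (htfin.mem_toFinset.mp (e ⟨n % (M+1), hmodlt n⟩).2)
  have hppnorm : ∀ n, ‖pp n‖ ≤ R := fun n => hRb _ (hppK n)
  have hnet : ∀ x ∈ K, ∃ n ≤ M, ‖x - pp n‖ ≤ ε/2 := by
    intro x hx
    obtain ⟨y, hy, hxy⟩ := Set.mem_iUnion₂.mp (hcov hx)
    set i := e.symm ⟨y, htfin.mem_toFinset.mpr hy⟩ with hi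
    have hilt : (i:ℕ) < M + 1 := hM ▸ i.isLt
    refine ⟨(i : ℕ), by omega, ?_⟩
    have hieq : (⟨(i:ℕ) % (M+1), hmodlt i⟩ : Fin F.card) = i :=
      Fin.ext (by simp [Nat.mod_eq_of_lt hilt])
    have hpy : pp i = y := by
      rw [hpp]; dsimp only; rw [hieq, hi]
      simp
    rw [hpy, ← dist_eq_norm]
    exact le_of_lt (by simpa using hxy)
  -- Lipschitz in norm form
  have hgl : ∀ a ∈ K, ∀ b ∈ K, |g' a - g' b| ≤ ‖a - b‖ := by
    intro a ha b hb
    have h := hg.dist_le_mul a ha b hb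
    rwa [Real.dist_eq, dist_eq_norm, NNReal.coe_one, one_mul] at h
  -- constants
  set GG : ℕ → ℝ := fun n => g' (pp n) with hGG
  set G : ℝ := |g' (pp 0)| + 2*R with hGdef
  have hGnn : 0 ≤ G := by positivity
  have hGb : ∀ n, |GG n| ≤ G := by
    intro n
    have h1 : |g' (pp n) - g' (pp 0)| ≤ ‖pp n - pp 0‖ := hgl _ (hppK n) _ (hppK 0)
    have h2 : ‖pp n - pp 0‖ ≤ 2*R := (norm_sub_le _ _).trans
      (by have := hppnorm n; have := hppnorm 0; linarith)
    have h3 := abs_sub_abs_le_abs_sub (g' (pp n)) (g' (pp 0))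
    simp only [hGG, hGdef]
    linarith
  set Mb : ℝ := 2*R + G with hMbdef
  set Q : ℝ := Mb + 2*R + 1 with hQdef
  set B : ℝ := Q + 3*R + Mb + G + 1 with hBdef
  have hMb0 : 0 ≤ Mb := by rw [hMbdef]; linarith
  have hQ0 : 0 ≤ Q := by rw [hQdef]; linarith
  have hB0 : 0 ≤ B := by rw [hBdef]; linarith
  -- target function pieces
  set sval : ℕ → (Fin d → ℝ) → ℝ := fun n z => ‖z - pp n‖ + GG n with hsval
  set smv : ℕ → (Fin d → ℝ) → ℝ :=
    fun n => Nat.rec (motive := fun _ => (Fin d → ℝ) → ℝ) (sval 0)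
      (fun m ihf z => min (ihf z) (sval (m+1) z)) n with hsmv
  have hsmv0 : ∀ z, smv 0 z = sval 0 z := fun z => by simp only [hsmv]; rfl
  have hsmvS : ∀ n z, smv (n+1) z = min (smv n z) (sval (n+1) z) := fun n z => by
    simp only [hsmv]
  have hnormb : ∀ n, ∀ z ∈ K, ‖z - pp n‖ ≤ 2*R := by
    intro n z hz
    exact (norm_sub_le _ _).trans (by have := hRb z hz; have := hppnorm n; linarith)
  have hsvalb : ∀ n, ∀ z ∈ K, |sval n z| ≤ Mb := by
    intro n z hz
    simp only [hsval]
    have h1 := hnormb n z hz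
    have h2 := hGb n
    have h3 : 0 ≤ ‖z - pp n‖ := norm_nonneg _
    rw [abs_le] at h2 ⊢
    rw [hMbdef]
    constructor <;> linarith [h2.1, h2.2]
  have hsmvb : ∀ n, ∀ z ∈ K, |smv n z| ≤ Mb := by
    intro n z hz
    induction n with
    | zero => rw [hsmv0]; exact hsvalb 0 z hz
    | succ n ih =>
      rw [hsmvS]
      have h1 := hsvalb (n+1) z hz
      rw [abs_le] at ih h1 ⊢
      constructor
      · exact le_min ih.1 h1.1
      · exact (min_le_left _ _).trans ih.2
  -- max of coordinate differences
  set mdiff : ℕ → (Fin d → ℝ) → ℝ :=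
    fun n z => Finset.univ.sup' Finset.univ_nonempty (fun i => z i - pp n i) with hmdiff
  have hcoordnorm : ∀ (v : Fin d → ℝ) (i : Fin d), |v i| ≤ ‖v‖ := fun v i => by
    rw [← Real.norm_eq_abs]; exact norm_le_pi_norm v i
  have hsubc : ∀ (u v : Fin d → ℝ) (i : Fin d), |u i - v i| ≤ ‖u - v‖ := by
    intro u v i
    have := hcoordnorm (u - v) i
    simpa using this
  have hmdiff_coord : ∀ n z (i : Fin d), z i - pp n i ≤ mdiff n z := by
    intro n z i
    simp only [hmdiff]
    exact Finset.le_sup' (fun i => z i - pp n i) (Finset.mem_univ i)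
  have hmdiff_le : ∀ n z, mdiff n z ≤ ‖z - pp n‖ := by
    intro n z
    simp only [hmdiff]
    refine Finset.sup'_le _ _ (fun i _ => ?_)
    exact (le_abs_self _).trans (hsubc z (pp n) i)
  have hmdiff_ge : ∀ n z, -‖z - pp n‖ ≤ mdiff n z := by
    intro n z
    have h1 := hmdiff_coord n z ⟨0, hd⟩
    have h2 := hsubc z (pp n) ⟨0, hd⟩
    rw [abs_le] at h2
    linarith [h2.1]
  -- dims
  set dims : ℕ → ℕ := fun l => if l = 0 then d
    else if l = 4*M+2 then 1 else if 2 ≤ l % 4 then d + 2 else d + 1 with hdims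
  have hdims0 : dims 0 = d := by simp [hdims]
  have hdimsL : dims (4*M+2) = 1 := by
    simp only [hdims]; split_ifs <;> (try contradiction) <;> omega
  have hdimsS : ∀ j, dims (4*j+1) = d+1 := fun j => by
    simp only [hdims]; split_ifs <;> (try contradiction) <;> omega
  have hdimsA : ∀ j, j < M → dims (4*j+2) = d+2 := fun j hj => by
    simp only [hdims]; split_ifs <;> (try contradiction) <;> omega
  have hdimsB : ∀ j, dims (4*j+3) = d+2 := fun j => by
    simp only [hdims]; split_ifs <;> (try contradiction) <;> omega
  have hdimsC : ∀ j, dims (4*j+4) = d+1 := fun j => by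
    simp only [hdims]; split_ifs <;> (try contradiction) <;> omega
  -- weights
  set PP : ℕ → ℕ → ℝ := fun n i => if h : i < d then pp n ⟨i, h⟩ else 0 with hPP
  set w : ∀ l : ℕ, Fin (dims (l+1)) → Fin (dims l) → ℝ :=
    fun l k i => netW d M B Q PP GG l (k:ℕ) (i:ℕ) with hwdef
  set b : ∀ l : ℕ, Fin (dims (l+1)) → ℝ := fun l k => netB d M B GG l (k:ℕ) with hbdef
  refine ⟨4*M+2, dims, hdims0, hdimsL, ?_, w, b, ?_⟩
  · intro l _; simp only [hdims]; split_ifs <;> (try contradiction) <;> omega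
  intro x hx k
  set X' : Fin (dims 0) → ℝ := fun i => x (Fin.cast hdims0 i) with hX'
  have hX'c : ∀ (i : Fin (dims 0)) (h2 : (i:ℕ) < d), X' i = x ⟨(i:ℕ), h2⟩ := by
    intro i h2
    simp only [hX']
    exact congrArg x (Fin.ext (by simp))
  have hxb : ∀ i : Fin d, |x i| ≤ R := fun i => (hcoordnorm x i).trans (hRb x hx)
  have h2R : ∀ n, ‖x - pp n‖ ≤ 2*R := fun n => hnormb n x hx
  have hsv : ∀ n, |sval n x| ≤ Mb := fun n => hsvalb n x hx
  have hsm : ∀ n, |smv n x| ≤ Mb := fun n => hsmvb n x hx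
  have hmdle : ∀ n, mdiff n x ≤ 2*R := fun n => (hmdiff_le n x).trans (h2R n)
  have hmdge : ∀ n, -(2*R) ≤ mdiff n x := fun n => le_trans (by linarith [h2R n]) (hmdiff_ge n x)
  -- the key induction
  have key : ∀ j, j ≤ M → ∀ k : Fin (dims (4*j+1)),
      (∀ h : (k:ℕ) < d, distNet dims w b (4*j+1) X' k = x ⟨(k:ℕ), h⟩)
      ∧ ((k:ℕ) = d → distNet dims w b (4*j+1) X' k = smv j x) := by
    intro j
    induction j with
    | zero =>
      intro _ k
      have hk1 : (k:ℕ) < d + 1 := by have h1 := k.isLt; have h2 := hdimsS 0; omega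
      have e0 : distNet dims w b (4*0+1) X' = distLayer (w (4*0)) (b (4*0)) X' := rfl
      have hd00 : dims (4*0) = d := hdims0
      constructor
      · intro h
        rw [e0]; simp only [distLayer]
        have hkd : (k:ℕ) < dims (4*0) := by rw [hd00]; omega
        have hnorm : ‖X' - w (4*0) k‖ = X' ⟨(k:ℕ), hkd⟩ + B := by
          refine pass_unit _ _ B ⟨(k:ℕ), hkd⟩ ?_ ?_ ?_ ?_
          · simp only [hwdef, Fin.val_mk]; rw [netW_pass (by omega) h, if_pos rfl]
          · intro i hi
            simp only [hwdef, Fin.val_mk]; rw [netW_pass (by omega) h, if_neg (fun hv => hi (Fin.ext hv))]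
          · have hy0 : X' ⟨(k:ℕ), hkd⟩ = x ⟨(k:ℕ), h⟩ := hX'c _ h
            rw [hy0]
            have := hxb ⟨(k:ℕ), h⟩
            rw [abs_le] at this
            rw [hBdef]; linarith [this.1]
          · intro i hi
            have hy0 : X' ⟨(k:ℕ), hkd⟩ = x ⟨(k:ℕ), h⟩ := hX'c _ h
            have hid : (i:ℕ) < d := by have h1 := i.isLt; have h2 := hd00; omega
            rw [hX'c i hid, hy0]
            have h1 := hxb ⟨(i:ℕ), hid⟩
            have h2 := hxb ⟨(k:ℕ), h⟩
            rw [abs_le] at h1 h2 ⊢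
            rw [hBdef]
            constructor <;> [skip; skip] <;> linarith [h1.1, h1.2, h2.1, h2.2]
        have hy0 : X' ⟨(k:ℕ), hkd⟩ = x ⟨(k:ℕ), h⟩ := hX'c _ h
        rw [hnorm, hy0]
        simp only [hbdef]
        rw [netB_0 h]
        ring
      · intro h
        rw [e0]; simp only [distLayer]
        -- the s₀ unit : ‖x − p₀‖ + g'(p₀)
        obtain ⟨istar, histar⟩ := exists_abs_eq_pi_norm hd (x - pp 0)
        have histar' : |x istar - pp 0 istar| = ‖x - pp 0‖ := by simpa using histar
        have hkd : ((istar:ℕ)) < dims (4*0) := by rw [hd00]; exact istar.isLt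
        have hnorm : ‖X' - w (4*0) k‖ = ‖x - pp 0‖ := by
          refine unit_eval _ _ _ ⟨(istar:ℕ), hkd⟩ (fun i => ?_) ?_
          · have hid : (i:ℕ) < d := by have h1 := i.isLt; have h2 := hd00; omega
            rw [hX'c i hid]
            simp only [hwdef, Fin.val_mk]
            rw [netW_m0 (by omega)]
            simp only [hPP]
            rw [dif_pos hid]
            exact hsubc x (pp 0) ⟨(i:ℕ), hid⟩
          · have hy0 : X' ⟨(istar:ℕ), hkd⟩ = x istar := by
              rw [hX'c ⟨(istar:ℕ), hkd⟩ istar.isLt]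
            rw [hy0]
            simp only [hwdef, Fin.val_mk]
            rw [netW_m0 (by omega)]
            simp only [hPP]
            rw [dif_pos istar.isLt, Fin.eta]
            exact histar'
        rw [hnorm]
        simp only [hbdef]
        rw [netB_0m (by omega)]
        rw [hsmv0]
    | succ j ih =>
      intro hjM k
      have hjM' : j < M := by omega
      have ihj := ih (by omega)
      -- Layer A output : (x, m, u)  at depth 4j+2
      have hA : ∀ k : Fin (dims (4*j+2)),
          (∀ h : (k:ℕ) < d, distNet dims w b (4*j+2) X' k = x ⟨(k:ℕ), h⟩)
          ∧ ((k:ℕ) = d → distNet dims w b (4*j+2) X' k = smv j x)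
          ∧ ((k:ℕ) = d+1 → distNet dims w b (4*j+2) X' k = Q + mdiff (j+1) x) := by
        intro k
        have hk2 : (k:ℕ) < d + 2 := by have h1 := k.isLt; have h2 := hdimsA j hjM'; omega
        have e1 : distNet dims w b (4*j+2) X'
            = distLayer (w (4*j+1)) (b (4*j+1)) (distNet dims w b (4*j+1) X') := rfl
        refine ⟨?_, ?_, ?_⟩
        · -- pass x
          intro h
          rw [e1]; simp only [distLayer]
          have hkd : (k:ℕ) < dims (4*j+1) := by rw [hdimsS j]; omega
          have hy0 : distNet dims w b (4*j+1) X' ⟨(k:ℕ), hkd⟩ = x ⟨(k:ℕ), h⟩ :=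
            (ihj ⟨(k:ℕ), hkd⟩).1 h
          have hnorm : ‖distNet dims w b (4*j+1) X' - w (4*j+1) k‖
              = distNet dims w b (4*j+1) X' ⟨(k:ℕ), hkd⟩ + B := by
            refine pass_unit _ _ B ⟨(k:ℕ), hkd⟩ ?_ ?_ ?_ ?_
            · simp only [hwdef, Fin.val_mk]; rw [netW_pass (by omega) h, if_pos rfl]
            · intro i hi
              simp only [hwdef, Fin.val_mk]
              rw [netW_pass (by omega) h,
                if_neg (fun (hv : (i:ℕ) = (k:ℕ)) => hi (Fin.ext hv))]
            · rw [hy0]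
              have := hxb ⟨(k:ℕ), h⟩
              rw [abs_le] at this
              rw [hBdef]; linarith [this.1]
            · intro i hi
              rw [hy0]
              have hi1 : (i:ℕ) < d + 1 := by have h1 := i.isLt; have h2 := hdimsS j; omega
              have h2 := hxb ⟨(k:ℕ), h⟩
              rw [abs_le] at h2
              rcases Nat.lt_or_ge (i:ℕ) d with hlt | hge
              · rw [(ihj i).1 hlt]
                have h1 := hxb ⟨(i:ℕ), hlt⟩
                rw [abs_le] at h1 ⊢
                rw [hBdef]
                constructor <;> linarith [h1.1, h1.2]
              · have hieq : (i:ℕ) = d := by omega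
                rw [(ihj i).2 hieq]
                have h1 := hsm j
                rw [abs_le] at h1 ⊢
                rw [hBdef, hMbdef]
                constructor <;> linarith [h1.1, h1.2]
          rw [hnorm, hy0]
          simp only [hbdef]
          rw [netB_mid (by omega) (by omega), if_neg (by omega)]
          ring
        · -- pass m
          intro h
          rw [e1]; simp only [distLayer]
          have hkd : d < dims (4*j+1) := by rw [hdimsS j]; omega
          have hy0 : distNet dims w b (4*j+1) X' ⟨d, hkd⟩ = smv j x :=
            (ihj ⟨d, hkd⟩).2 rfl
          have hnorm : ‖distNet dims w b (4*j+1) X' - w (4*j+1) k‖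
              = distNet dims w b (4*j+1) X' ⟨d, hkd⟩ + B := by
            refine pass_unit _ _ B ⟨d, hkd⟩ ?_ ?_ ?_ ?_
            · simp only [hwdef, Fin.val_mk]
              rw [netW_mpass (by omega) (by omega) (by omega) (by omega) h, if_pos rfl]
            · intro i hi
              simp only [hwdef, Fin.val_mk]
              rw [netW_mpass (by omega) (by omega) (by omega) (by omega) h,
                if_neg (fun (hv : (i:ℕ) = d) => hi (Fin.ext hv))]
            · rw [hy0]
              have h1 := hsm j
              rw [abs_le] at h1
              rw [hBdef, hMbdef]; linarith [h1.1]
            · intro i hi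
              rw [hy0]
              have hi1 : (i:ℕ) < d + 1 := by have h1 := i.isLt; have h2 := hdimsS j; omega
              have h2 := hsm j
              rw [abs_le] at h2
              have hid : (i:ℕ) < d := by
                rcases Nat.lt_or_ge (i:ℕ) d with hlt | hge
                · exact hlt
                · exact absurd (Fin.ext (by omega : (i:ℕ) = d)) hi
              rw [(ihj i).1 hid]
              have h1 := hxb ⟨(i:ℕ), hid⟩
              rw [abs_le] at h1 ⊢
              rw [hBdef, hMbdef]
              constructor <;> linarith [h1.1, h1.2, h2.1, h2.2]
          rw [hnorm, hy0]
          simp only [hbdef]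
          rw [netB_mid (by omega) (by omega), if_neg (by omega)]
          ring
        · -- u unit
          intro h
          rw [e1]; simp only [distLayer]
          obtain ⟨istar, -, histar⟩ := Finset.exists_mem_eq_sup'
            (Finset.univ_nonempty (α := Fin d)) (fun i : Fin d => x i - pp (j+1) i)
          have hmd : mdiff (j+1) x = x istar - pp (j+1) istar := by
            simp only [hmdiff]; exact histar
          have hkd : ((istar:ℕ)) < dims (4*j+1) := by rw [hdimsS j]; omega
          have hdiv : (4*j+1)/4 = j := by omega
          have hnorm : ‖distNet dims w b (4*j+1) X' - w (4*j+1) k‖ = Q + mdiff (j+1) x := by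
            refine unit_eval _ _ _ ⟨(istar:ℕ), hkd⟩ (fun i => ?_) ?_
            · have hi1 : (i:ℕ) < d + 1 := by have h1 := i.isLt; have h2 := hdimsS j; omega
              simp only [hwdef, Fin.val_mk]
              rw [netW_u (by omega) (by omega) (by omega) (by omega) (by omega), hdiv]
              rcases Nat.lt_or_ge (i:ℕ) d with hlt | hge
              · rw [if_pos hlt, (ihj i).1 hlt]
                simp only [hPP]
                rw [dif_pos hlt]
                have ha := hmdiff_coord (j+1) x ⟨(i:ℕ), hlt⟩
                have hb' := hsubc x (pp (j+1)) ⟨(i:ℕ), hlt⟩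
                have hc' := h2R (j+1)
                rw [abs_le] at hb' ⊢
                rw [hQdef, hMbdef]
                constructor
                · nlinarith [hmdge (j+1), hb'.1]
                · nlinarith [hb'.1]
              · have hieq : (i:ℕ) = d := by omega
                rw [if_neg (by omega), (ihj i).2 hieq, sub_zero]
                have h1 := hsm j
                rw [abs_le] at h1 ⊢
                rw [hQdef, hMbdef]
                constructor
                · nlinarith [hmdge (j+1), h1.1]
                · nlinarith [hmdge (j+1), h1.2]
            · simp only [hwdef, Fin.val_mk]
              rw [netW_u (by omega) (by omega) (by omega) (by omega) (by omega), hdiv]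
              have hy0 : distNet dims w b (4*j+1) X' ⟨(istar:ℕ), hkd⟩ = x istar :=
                (ihj ⟨(istar:ℕ), hkd⟩).1 istar.isLt
              rw [if_pos istar.isLt, hy0]
              simp only [hPP]
              rw [dif_pos istar.isLt, Fin.eta]
              have hb' := hsubc x (pp (j+1)) istar
              rw [abs_le] at hb'
              have hc' := h2R (j+1)
              rw [hmd, abs_of_nonneg]
              · ring
              · rw [hQdef, hMbdef]; nlinarith [hb'.1]
          rw [hnorm]
          simp only [hbdef]
          rw [netB_mid (by omega) (by omega), if_pos (by omega)]
          ring
      -- Layer B output : (x, m, r) at depth 4j+3, r = Q + ‖x − p_{j+1}‖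
      have hB : ∀ k : Fin (dims (4*j+3)),
          (∀ h : (k:ℕ) < d, distNet dims w b (4*j+3) X' k = x ⟨(k:ℕ), h⟩)
          ∧ ((k:ℕ) = d → distNet dims w b (4*j+3) X' k = smv j x)
          ∧ ((k:ℕ) = d+1 → distNet dims w b (4*j+3) X' k = Q + ‖x - pp (j+1)‖) := by
        intro k
        have hk2 : (k:ℕ) < d + 2 := by have h1 := k.isLt; have h2 := hdimsB j; omega
        have e1 : distNet dims w b (4*j+3) X'
            = distLayer (w (4*j+2)) (b (4*j+2)) (distNet dims w b (4*j+2) X') := rfl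
        have hdin : dims (4*j+2) = d + 2 := hdimsA j hjM'
        have hbnd : ∀ i : Fin (dims (4*j+2)), |distNet dims w b (4*j+2) X' i| ≤ Q + 2*R := by
          intro i
          have hi1 : (i:ℕ) < d + 2 := by have h1 := i.isLt; have h2 := hdin; omega
          rcases Nat.lt_or_ge (i:ℕ) d with hlt | hge
          · rw [(hA i).1 hlt]
            have h1 := hxb ⟨(i:ℕ), hlt⟩
            rw [abs_le] at h1 ⊢
            rw [hQdef, hMbdef]
            constructor <;> linarith [h1.1, h1.2]
          · rcases Nat.lt_or_ge (i:ℕ) (d+1) with hlt1 | hge1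
            · have hieq : (i:ℕ) = d := by omega
              rw [(hA i).2.1 hieq]
              have h1 := hsm j
              rw [abs_le] at h1 ⊢
              rw [hQdef]
              constructor <;> linarith [h1.1, h1.2]
            · have hieq : (i:ℕ) = d+1 := by omega
              rw [(hA i).2.2 hieq]
              have h1 := hmdle (j+1)
              have h2 := hmdge (j+1)
              rw [abs_le]
              constructor <;> linarith
        refine ⟨?_, ?_, ?_⟩
        · -- pass x
          intro h
          rw [e1]; simp only [distLayer]
          have hkd : (k:ℕ) < dims (4*j+2) := by rw [hdin]; omega
          have hy0 : distNet dims w b (4*j+2) X' ⟨(k:ℕ), hkd⟩ = x ⟨(k:ℕ), h⟩ :=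
            (hA ⟨(k:ℕ), hkd⟩).1 h
          have hnorm : ‖distNet dims w b (4*j+2) X' - w (4*j+2) k‖
              = distNet dims w b (4*j+2) X' ⟨(k:ℕ), hkd⟩ + B := by
            refine pass_unit _ _ B ⟨(k:ℕ), hkd⟩ ?_ ?_ ?_ ?_
            · simp only [hwdef, Fin.val_mk]; rw [netW_pass (by omega) h, if_pos rfl]
            · intro i hi
              simp only [hwdef, Fin.val_mk]
              rw [netW_pass (by omega) h,
                if_neg (fun (hv : (i:ℕ) = (k:ℕ)) => hi (Fin.ext hv))]
            · rw [hy0]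
              have := hxb ⟨(k:ℕ), h⟩
              rw [abs_le] at this
              rw [hBdef]; linarith [this.1]
            · intro i hi
              rw [hy0]
              have h1 := hbnd i
              have h2 := hxb ⟨(k:ℕ), h⟩
              rw [abs_le] at h1 h2 ⊢
              rw [hBdef]
              constructor <;> linarith [h1.1, h1.2, h2.1]
          rw [hnorm, hy0]
          simp only [hbdef]
          rw [netB_mid (by omega) (by omega), if_neg (by omega)]
          ring
        · -- pass m
          intro h
          rw [e1]; simp only [distLayer]
          have hkd : d < dims (4*j+2) := by rw [hdin]; omega
          have hy0 : distNet dims w b (4*j+2) X' ⟨d, hkd⟩ = smv j x :=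
            (hA ⟨d, hkd⟩).2.1 rfl
          have hnorm : ‖distNet dims w b (4*j+2) X' - w (4*j+2) k‖
              = distNet dims w b (4*j+2) X' ⟨d, hkd⟩ + B := by
            refine pass_unit _ _ B ⟨d, hkd⟩ ?_ ?_ ?_ ?_
            · simp only [hwdef, Fin.val_mk]
              rw [netW_mpass (by omega) (by omega) (by omega) (by omega) h, if_pos rfl]
            · intro i hi
              simp only [hwdef, Fin.val_mk]
              rw [netW_mpass (by omega) (by omega) (by omega) (by omega) h,
                if_neg (fun (hv : (i:ℕ) = d) => hi (Fin.ext hv))]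
            · rw [hy0]
              have h1 := hsm j
              rw [abs_le] at h1
              rw [hBdef, hMbdef]; linarith [h1.1]
            · intro i hi
              rw [hy0]
              have h1 := hbnd i
              have h2 := hsm j
              rw [abs_le] at h1 h2 ⊢
              rw [hBdef, hMbdef]
              constructor <;> linarith [h1.1, h1.2, h2.1]
          rw [hnorm, hy0]
          simp only [hbdef]
          rw [netB_mid (by omega) (by omega), if_neg (by omega)]
          ring
        · -- r unit
          intro h
          rw [e1]; simp only [distLayer]
          have hdiv : (4*j+2)/4 = j := by omega
          have hnq : (0:ℝ) ≤ ‖x - pp (j+1)‖ := norm_nonneg _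
          have hub : ∀ i : Fin (dims (4*j+2)),
              |distNet dims w b (4*j+2) X' i - w (4*j+2) k i| ≤ Q + ‖x - pp (j+1)‖ := by
            intro i
            have hi1 : (i:ℕ) < d + 2 := by have h1 := i.isLt; have h2 := hdin; omega
            simp only [hwdef, Fin.val_mk]
            rw [netW_r (by omega) (by omega) (by omega) (by omega) (by omega), hdiv]
            rcases Nat.lt_or_ge (i:ℕ) d with hlt | hge
            · rw [if_pos hlt, (hA i).1 hlt]
              simp only [hPP]
              rw [dif_pos hlt]
              have hb' := hsubc x (pp (j+1)) ⟨(i:ℕ), hlt⟩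
              have hc' := h2R (j+1)
              rw [abs_le] at hb' ⊢
              constructor
              · nlinarith [hb'.1]
              · rw [hQdef, hMbdef]; nlinarith [hb'.2]
            · rw [if_neg (by omega), sub_zero]
              rcases Nat.lt_or_ge (i:ℕ) (d+1) with hlt1 | hge1
              · have hieq : (i:ℕ) = d := by omega
                rw [(hA i).2.1 hieq]
                have h1 := hsm j
                rw [abs_le] at h1 ⊢
                rw [hQdef]
                constructor <;> nlinarith [h1.1, h1.2]
              · have hieq : (i:ℕ) = d+1 := by omega
                rw [(hA i).2.2 hieq]
                have h1 := hmdiff_le (j+1) x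
                have h2 := hmdge (j+1)
                rw [abs_le]
                constructor
                · rw [hQdef, hMbdef]; nlinarith
                · linarith
          obtain ⟨istar, histar⟩ := exists_abs_eq_pi_norm hd (x - pp (j+1))
          have histar' : |x istar - pp (j+1) istar| = ‖x - pp (j+1)‖ := by simpa using histar
          have hnorm : ‖distNet dims w b (4*j+2) X' - w (4*j+2) k‖ = Q + ‖x - pp (j+1)‖ := by
            rcases le_or_gt 0 (x istar - pp (j+1) istar) with hpos | hneg
            · -- mdiff attains the norm; use coordinate d+1
              have hmdeq : mdiff (j+1) x = ‖x - pp (j+1)‖ := by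
                refine le_antisymm (hmdiff_le (j+1) x) ?_
                rw [← histar', abs_of_nonneg hpos]
                exact hmdiff_coord (j+1) x istar
              have hkd : d+1 < dims (4*j+2) := by rw [hdin]; omega
              refine unit_eval _ _ _ ⟨d+1, hkd⟩ hub ?_
              simp only [hwdef, Fin.val_mk]
              rw [netW_r (by omega) (by omega) (by omega) (by omega) (by omega), hdiv]
              rw [if_neg (by omega), sub_zero, (hA ⟨d+1, hkd⟩).2.2 rfl, hmdeq]
              rw [abs_of_nonneg (by linarith)]
            · -- coordinate istar attains
              have hkd : ((istar:ℕ)) < dims (4*j+2) := by rw [hdin]; omega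
              refine unit_eval _ _ _ ⟨(istar:ℕ), hkd⟩ hub ?_
              simp only [hwdef, Fin.val_mk]
              rw [netW_r (by omega) (by omega) (by omega) (by omega) (by omega), hdiv]
              have hy0 : distNet dims w b (4*j+2) X' ⟨(istar:ℕ), hkd⟩ = x istar :=
                (hA ⟨(istar:ℕ), hkd⟩).1 istar.isLt
              rw [if_pos istar.isLt, hy0]
              simp only [hPP]
              rw [dif_pos istar.isLt, Fin.eta]
              have hnormeq : ‖x - pp (j+1)‖ = pp (j+1) istar - x istar := by
                rw [← histar', abs_of_neg hneg]; ring
              rw [abs_of_nonpos (by rw [hQdef, hMbdef]; nlinarith [hneg.le]), hnormeq]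
              ring
          rw [hnorm]
          simp only [hbdef]
          rw [netB_mid (by omega) (by omega), if_pos (by omega)]
          ring
      -- Layer C output : (x, −m') at depth 4j+4, m' = smv (j+1) x
      have hC : ∀ k : Fin (dims (4*j+4)),
          (∀ h : (k:ℕ) < d, distNet dims w b (4*j+4) X' k = x ⟨(k:ℕ), h⟩)
          ∧ ((k:ℕ) = d → distNet dims w b (4*j+4) X' k = - smv (j+1) x) := by
        intro k
        have hk1 : (k:ℕ) < d + 1 := by have h1 := k.isLt; have h2 := hdimsC j; omega
        have e1 : distNet dims w b (4*j+4) X'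
            = distLayer (w (4*j+3)) (b (4*j+3)) (distNet dims w b (4*j+3) X') := rfl
        have hdin : dims (4*j+3) = d + 2 := hdimsB j
        have hbnd : ∀ i : Fin (dims (4*j+3)), |distNet dims w b (4*j+3) X' i| ≤ Q + 2*R := by
          intro i
          have hi1 : (i:ℕ) < d + 2 := by have h1 := i.isLt; have h2 := hdin; omega
          rcases Nat.lt_or_ge (i:ℕ) d with hlt | hge
          · rw [(hB i).1 hlt]
            have h1 := hxb ⟨(i:ℕ), hlt⟩
            rw [abs_le] at h1 ⊢
            rw [hQdef, hMbdef]
            constructor <;> linarith [h1.1, h1.2]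
          · rcases Nat.lt_or_ge (i:ℕ) (d+1) with hlt1 | hge1
            · have hieq : (i:ℕ) = d := by omega
              rw [(hB i).2.1 hieq]
              have h1 := hsm j
              rw [abs_le] at h1 ⊢
              rw [hQdef]
              constructor <;> linarith [h1.1, h1.2]
            · have hieq : (i:ℕ) = d+1 := by omega
              rw [(hB i).2.2 hieq]
              have h1 := h2R (j+1)
              have h2 : (0:ℝ) ≤ ‖x - pp (j+1)‖ := norm_nonneg _
              rw [abs_le]
              constructor <;> linarith
        constructor
        · -- pass x
          intro h
          rw [e1]; simp only [distLayer]
          have hkd : (k:ℕ) < dims (4*j+3) := by rw [hdin]; omega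
          have hy0 : distNet dims w b (4*j+3) X' ⟨(k:ℕ), hkd⟩ = x ⟨(k:ℕ), h⟩ :=
            (hB ⟨(k:ℕ), hkd⟩).1 h
          have hnorm : ‖distNet dims w b (4*j+3) X' - w (4*j+3) k‖
              = distNet dims w b (4*j+3) X' ⟨(k:ℕ), hkd⟩ + B := by
            refine pass_unit _ _ B ⟨(k:ℕ), hkd⟩ ?_ ?_ ?_ ?_
            · simp only [hwdef, Fin.val_mk]; rw [netW_pass (by omega) h, if_pos rfl]
            · intro i hi
              simp only [hwdef, Fin.val_mk]
              rw [netW_pass (by omega) h,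
                if_neg (fun (hv : (i:ℕ) = (k:ℕ)) => hi (Fin.ext hv))]
            · rw [hy0]
              have := hxb ⟨(k:ℕ), h⟩
              rw [abs_le] at this
              rw [hBdef]; linarith [this.1]
            · intro i hi
              rw [hy0]
              have h1 := hbnd i
              have h2 := hxb ⟨(k:ℕ), h⟩
              rw [abs_le] at h1 h2 ⊢
              rw [hBdef]
              constructor <;> linarith [h1.1, h1.2, h2.1]
          rw [hnorm, hy0]
          simp only [hbdef]
          rw [netB_mid (by omega) (by omega), if_neg (by omega)]
          ring
        · -- min unit
          intro h
          rw [e1]; simp only [distLayer]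
          have hdiv : (4*j+3)/4 = j := by omega
          have hsvx : sval (j+1) x = ‖x - pp (j+1)‖ + GG (j+1) := by simp only [hsval]
          have hsm1 := hsm j
          have hsv1 := hsv (j+1)
          rw [abs_le] at hsm1 hsv1
          have hminle : min (smv j x) (sval (j+1) x) ≤ smv j x := min_le_left _ _
          have hminle2 : min (smv j x) (sval (j+1) x) ≤ sval (j+1) x := min_le_right _ _
          have hminge : -Mb ≤ min (smv j x) (sval (j+1) x) := le_min hsm1.1 hsv1.1
          have hub : ∀ i : Fin (dims (4*j+3)),
              |distNet dims w b (4*j+3) X' i - w (4*j+3) k i|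
                ≤ B - min (smv j x) (sval (j+1) x) := by
            intro i
            have hi1 : (i:ℕ) < d + 2 := by have h1 := i.isLt; have h2 := hdin; omega
            simp only [hwdef, Fin.val_mk]
            rw [netW_C (by omega) (by omega) (by omega) (by omega), hdiv]
            rcases Nat.lt_or_ge (i:ℕ) d with hlt | hge
            · rw [if_pos hlt, sub_zero, (hB i).1 hlt]
              have h1 := hxb ⟨(i:ℕ), hlt⟩
              rw [abs_le] at h1 ⊢
              rw [hBdef, hMbdef]
              constructor <;> linarith [h1.1, h1.2]
            · rcases Nat.lt_or_ge (i:ℕ) (d+1) with hlt1 | hge1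
              · have hieq : (i:ℕ) = d := by omega
                rw [if_neg (by omega), if_pos (by omega), (hB i).2.1 hieq]
                rw [abs_le]
                constructor <;> [skip; skip]
                · rw [hBdef, hMbdef]; linarith [hsm1.1]
                · linarith [hsm1.2]
              · have hieq : (i:ℕ) = d+1 := by omega
                rw [if_neg (by omega), if_neg (by omega), (hB i).2.2 hieq]
                have heq : Q + ‖x - pp (j+1)‖ - (B + Q - GG (j+1)) = sval (j+1) x - B := by
                  rw [hsvx]; ring
                rw [heq, abs_le]
                constructor
                · rw [hBdef, hMbdef]; linarith [hsv1.1]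
                · linarith [hsv1.2]
          have hnorm : ‖distNet dims w b (4*j+3) X' - w (4*j+3) k‖
              = B - min (smv j x) (sval (j+1) x) := by
            rcases le_total (smv j x) (sval (j+1) x) with hc | hc
            · have hkd : d < dims (4*j+3) := by rw [hdin]; omega
              refine unit_eval _ _ _ ⟨d, hkd⟩ hub ?_
              simp only [hwdef, Fin.val_mk]
              rw [netW_C (by omega) (by omega) (by omega) (by omega), hdiv]
              rw [if_neg (by omega), if_pos rfl, (hB ⟨d, hkd⟩).2.1 rfl]
              rw [min_eq_left hc, abs_of_nonpos (by rw [hBdef, hMbdef]; linarith [hsm1.2])]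
              ring
            · have hkd : d+1 < dims (4*j+3) := by rw [hdin]; omega
              refine unit_eval _ _ _ ⟨d+1, hkd⟩ hub ?_
              simp only [hwdef, Fin.val_mk]
              rw [netW_C (by omega) (by omega) (by omega) (by omega), hdiv]
              rw [if_neg (by omega), if_neg (by omega), (hB ⟨d+1, hkd⟩).2.2 rfl]
              have heq : Q + ‖x - pp (j+1)‖ - (B + Q - GG (j+1)) = sval (j+1) x - B := by
                rw [hsvx]; ring
              rw [heq, min_eq_right hc,
                abs_of_nonpos (by rw [hBdef, hMbdef]; linarith [hsv1.2])]
              ring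
          rw [hnorm]
          simp only [hbdef]
          rw [netB_mid (by omega) (by omega), if_neg (by omega)]
          rw [hsmvS]
          ring
      -- Layer D output : (x, m') at depth 4j+5 = 4(j+1)+1
      have hD : ∀ k : Fin (dims (4*j+5)),
          (∀ h : (k:ℕ) < d, distNet dims w b (4*j+5) X' k = x ⟨(k:ℕ), h⟩)
          ∧ ((k:ℕ) = d → distNet dims w b (4*j+5) X' k = smv (j+1) x) := by
        intro k
        have hd5 : dims (4*j+5) = d+1 := hdimsS (j+1)
        have hk1 : (k:ℕ) < d + 1 := by have h1 := k.isLt; have h2 := hd5; omega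
        have e1 : distNet dims w b (4*j+5) X'
            = distLayer (w (4*j+4)) (b (4*j+4)) (distNet dims w b (4*j+4) X') := rfl
        have hdin : dims (4*j+4) = d + 1 := hdimsC j
        have hsm2 := hsm (j+1)
        rw [abs_le] at hsm2
        constructor
        · -- pass x
          intro h
          rw [e1]; simp only [distLayer]
          have hkd : (k:ℕ) < dims (4*j+4) := by rw [hdin]; omega
          have hy0 : distNet dims w b (4*j+4) X' ⟨(k:ℕ), hkd⟩ = x ⟨(k:ℕ), h⟩ :=
            (hC ⟨(k:ℕ), hkd⟩).1 h
          have hnorm : ‖distNet dims w b (4*j+4) X' - w (4*j+4) k‖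
              = distNet dims w b (4*j+4) X' ⟨(k:ℕ), hkd⟩ + B := by
            refine pass_unit _ _ B ⟨(k:ℕ), hkd⟩ ?_ ?_ ?_ ?_
            · simp only [hwdef, Fin.val_mk]; rw [netW_pass (by omega) h, if_pos rfl]
            · intro i hi
              simp only [hwdef, Fin.val_mk]
              rw [netW_pass (by omega) h,
                if_neg (fun (hv : (i:ℕ) = (k:ℕ)) => hi (Fin.ext hv))]
            · rw [hy0]
              have := hxb ⟨(k:ℕ), h⟩
              rw [abs_le] at this
              rw [hBdef]; linarith [this.1]
            · intro i hi
              rw [hy0]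
              have hi1 : (i:ℕ) < d + 1 := by have h1 := i.isLt; have h2 := hdin; omega
              have h2 := hxb ⟨(k:ℕ), h⟩
              rw [abs_le] at h2
              rcases Nat.lt_or_ge (i:ℕ) d with hlt | hge
              · rw [(hC i).1 hlt]
                have h1 := hxb ⟨(i:ℕ), hlt⟩
                rw [abs_le] at h1 ⊢
                rw [hBdef]
                constructor <;> linarith [h1.1, h1.2]
              · have hieq : (i:ℕ) = d := by omega
                rw [(hC i).2 hieq, abs_le]
                rw [hBdef, hMbdef]
                constructor <;> linarith [hsm2.1, hsm2.2]
          rw [hnorm, hy0]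
          simp only [hbdef]
          rw [netB_mid (by omega) (by omega), if_neg (by omega)]
          ring
        · -- negation unit
          intro h
          rw [e1]; simp only [distLayer]
          have hkd : d < dims (4*j+4) := by rw [hdin]; omega
          have hnorm : ‖distNet dims w b (4*j+4) X' - w (4*j+4) k‖ = B + smv (j+1) x := by
            refine unit_eval _ _ _ ⟨d, hkd⟩ (fun i => ?_) ?_
            · have hi1 : (i:ℕ) < d + 1 := by have h1 := i.isLt; have h2 := hdin; omega
              simp only [hwdef, Fin.val_mk]
              rw [netW_D (by omega) (by omega) (by omega) (by omega)]
              rcases Nat.lt_or_ge (i:ℕ) d with hlt | hge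
              · rw [if_neg (by omega), sub_zero, (hC i).1 hlt]
                have h1 := hxb ⟨(i:ℕ), hlt⟩
                rw [abs_le] at h1 ⊢
                rw [hBdef, hMbdef]
                constructor <;> linarith [h1.1, h1.2, hsm2.1]
              · have hieq : (i:ℕ) = d := by omega
                rw [if_pos (by omega), (hC i).2 hieq, abs_le]
                rw [hBdef, hMbdef]
                constructor <;> linarith [hsm2.1, hsm2.2]
            · simp only [hwdef, Fin.val_mk]
              rw [netW_D (by omega) (by omega) (by omega) (by omega)]
              rw [if_pos rfl, (hC ⟨d, hkd⟩).2 rfl]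
              rw [abs_of_nonpos (by rw [hBdef, hMbdef]; linarith [hsm2.1])]
              ring
          rw [hnorm]
          simp only [hbdef]
          rw [netB_mid (by omega) (by omega), if_neg (by omega)]
          ring
      exact hD k
  -- final layer
  have hfin := key M le_rfl
  have e1 : distNet dims w b (4*M+2) X'
      = distLayer (w (4*M+1)) (b (4*M+1)) (distNet dims w b (4*M+1) X') := rfl
  rw [e1]; simp only [distLayer]
  have hkd : d < dims (4*M+1) := by rw [hdimsS M]; omega
  have hsmM := hsm M
  rw [abs_le] at hsmM
  have hnorm : ‖distNet dims w b (4*M+1) X' - w (4*M+1) k‖ = smv M x + B := by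
    refine unit_eval _ _ _ ⟨d, hkd⟩ (fun i => ?_) ?_
    · have hi1 : (i:ℕ) < d + 1 := by have h1 := i.isLt; have h2 := hdimsS M; omega
      simp only [hwdef, Fin.val_mk]
      rw [netW_final]
      rcases Nat.lt_or_ge (i:ℕ) d with hlt | hge
      · rw [if_neg (by omega), sub_zero, (hfin i).1 hlt]
        have h1 := hxb ⟨(i:ℕ), hlt⟩
        rw [abs_le] at h1 ⊢
        rw [hBdef, hMbdef]
        constructor <;> linarith [h1.1, h1.2, hsmM.1]
      · have hieq : (i:ℕ) = d := by omega
        rw [if_pos (by omega), (hfin i).2 hieq, sub_neg_eq_add, abs_le]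
        rw [hBdef, hMbdef]
        constructor <;> linarith [hsmM.1, hsmM.2]
    · simp only [hwdef, Fin.val_mk]
      rw [netW_final, if_pos rfl, (hfin ⟨d, hkd⟩).2 rfl, sub_neg_eq_add]
      rw [abs_of_nonneg (by rw [hBdef, hMbdef]; linarith [hsmM.1])]
  rw [hnorm]
  simp only [hbdef]
  rw [netB_final]
  -- |smv M x − g' x| ≤ ε
  have hlowS : ∀ m, g' x ≤ sval m x := by
    intro m
    simp only [hsval, hGG]
    have h1 := hgl x hx (pp m) (hppK m)
    have h2 := le_abs_self (g' x - g' (pp m))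
    have h3 := abs_sub_comm (g' x) (g' (pp m))
    linarith
  have hlow : g' x ≤ smv M x := by
    have : ∀ n, g' x ≤ smv n x := by
      intro n
      induction n with
      | zero => rw [hsmv0]; exact hlowS 0
      | succ n ih => rw [hsmvS]; exact le_min ih (hlowS (n+1))
    exact this M
  have hup : smv M x ≤ g' x + ε := by
    obtain ⟨n, hnM, hn⟩ := hnet x hx
    have h1 : smv M x ≤ sval n x := by
      have hmono : ∀ N, n ≤ N → smv N x ≤ sval n x := by
        intro N
        induction N with
        | zero => intro hN; have : n = 0 := by omega
                  subst this; rw [hsmv0]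
        | succ N ih =>
          intro hN
          rw [hsmvS]
          rcases Nat.lt_or_ge n (N+1) with hlt | hge
          · exact (min_le_left _ _).trans (ih (by omega))
          · have : n = N+1 := by omega
            subst this; exact min_le_right _ _
      exact hmono M hnM
    have h2 : g' (pp n) - g' x ≤ ‖x - pp n‖ := by
      have h3 := hgl (pp n) (hppK n) x hx
      have h4 := le_abs_self (g' (pp n) - g' x)
      rw [norm_sub_rev] at h3
      linarith
    have h5 : sval n x = ‖x - pp n‖ + g' (pp n) := by simp only [hsval, hGG]
    linarith [hn]
  rw [abs_le]
  constructor <;> [linarith; linarith]
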